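/- Let n ≥ 2 and let z = [z₁,…,z_{n+1}] ∈ ∂ℍⁿ_ℂ with z not in the projective line Span({[e₁],[e_{n+1}]}). Let M_z be the (n−1)×(n−1) matrix with (i,j) entry z_{i+1} z̄_{j+1} for i ≠ j and z_{n+1} z̄₁ + |z_{i+1}|² for i = j. Then there exists an invertible (n−1)×(n−1) complex matrix M such that M M_z M^{−1} = |z₁ z_{n+1}| · diag(−e^{i𝔸([z],[e₁],[e_{n+1}])}, …, −e^{i𝔸([z],[e₁],[e_{n+1}])}, e^{i𝔸([e₁],[z],[e_{n+1}])}), i.e. M_z is diagonalizable with eigenvalue |z₁z_{n+1}|·(−e^{i𝔸([z],[e₁],[e_{n+1}])}) of multiplicity n−2 and eigenvalue |z₁z_{n+1}|·e^{i𝔸([e₁],[z],[e_{n+1}])} of multiplicity 1, where 𝔸 denotes the Cartan angular invariant. -/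

import Mathlib

noncomputable section

open scoped ComplexConjugate
open scoped Matrix

namespace CKG

/-- The underlying vector space `ℂ^{n+1}`. -/
abbrev Vc (n : ℕ) := Fin (n + 1) → ℂ

instance projTopInst (K V : Type*) [DivisionRing K] [AddCommGroup V] [Module K V]
    [TopologicalSpace V] : TopologicalSpace (Projectivization K V) :=
  inferInstanceAs (TopologicalSpace (Quotient (projectivizationSetoid K V)))

/-- The complex projective space `ℙⁿ_ℂ`. -/
abbrev Prj (n : ℕ) := Projectivization ℂ (Vc n)

/-- The Hermitian matrix `H` with ones at the corners `(1,n+1)`, `(n+1,1)` and the identity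
in the central `(n-1) × (n-1)` block. -/
def Hmat (n : ℕ) : Matrix (Fin (n + 1)) (Fin (n + 1)) ℂ := fun i j =>
  if (i = 0 ∧ j = Fin.last n) ∨ (i = Fin.last n ∧ j = 0) ∨
      (i = j ∧ i ≠ 0 ∧ i ≠ Fin.last n) then 1 else 0

/-- The Hermitian form of signature `(1,n)` induced by `H`. -/
def herm (n : ℕ) (v w : Vc n) : ℂ := ∑ i, ∑ j, v i * Hmat n i j * conj (w j)

/-- The projective hyperplane `p^⊥` of points orthogonal to `p`. -/
def orthHyp (n : ℕ) (p : Prj n) : Set (Prj n) := {q | herm n q.rep p.rep = 0}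

/-- The projective span of a set of points of `ℙⁿ_ℂ`, as a set of points. -/
def projSpan (n : ℕ) (S : Set (Prj n)) : Set (Prj n) :=
  {r | r.rep ∈ Submodule.span ℂ (Projectivization.rep '' S)}

/-- The standard basis vector `e₁`. -/
def e1v (n : ℕ) : Vc n := Pi.single 0 1

/-- The standard basis vector `e_{n+1}`. -/
def eN1v (n : ℕ) : Vc n := Pi.single (Fin.last n) 1

lemma e1v_ne_zero (n : ℕ) : e1v n ≠ 0 := by
  intro h; have := congrFun h 0; simp [e1v] at this

lemma eN1v_ne_zero (n : ℕ) : eN1v n ≠ 0 := by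
  intro h; have := congrFun h (Fin.last n); simp [eN1v] at this

/-- The point `[e₁] ∈ ℙⁿ_ℂ`. -/
def e1pt (n : ℕ) : Prj n := Projectivization.mk ℂ (e1v n) (e1v_ne_zero n)

/-- The point `[e_{n+1}] ∈ ℙⁿ_ℂ`. -/
def eN1pt (n : ℕ) : Prj n := Projectivization.mk ℂ (eN1v n) (eN1v_ne_zero n)

/-- The inclusion of indices `{1, …, n-1}` (numbering `e₂, …, e_n`) into `Fin (n+1)`. -/
def idx {n : ℕ} (i : Fin (n - 1)) : Fin (n + 1) := ⟨i.val + 1, by omega⟩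

/-- The `(n-1) × (n-1)` matrix `M_z` with `(i,j)` entry `z_{i+1} z̄_{j+1}` for `i ≠ j` and
`z_{n+1} z̄₁ + |z_{i+1}|²` for `i = j`. -/
def Mz (n : ℕ) (z : Vc n) : Matrix (Fin (n - 1)) (Fin (n - 1)) ℂ := fun i j =>
  (if i = j then z (Fin.last n) * conj (z 0) else 0) + z (idx i) * conj (z (idx j))

/-- The embedding `ℂ^{n-1} → ℂ^{n+1}` into the coordinates `2, …, n`
(realizing the identification of `ℙ^{n-2}_ℂ` with `Span({e₂,…,e_n})`). -/
def embedMid (n : ℕ) (u : Fin (n - 1) → ℂ) : Vc n :=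
  fun i => ∑ j : Fin (n - 1), if idx j = i then u j else 0

/-- The projection `ℂ^{n+1} → ℂ^{n-1}` onto the coordinates `2, …, n`. -/
def midOf (n : ℕ) (v : Vc n) : Fin (n - 1) → ℂ := fun j => v (idx j)

/-- The Cartan angular invariant `𝔸(x,y,w) = arg(−⟨x,y⟩⟨y,w⟩⟨w,x⟩)`. -/
def cartanArg (n : ℕ) (x y w : Vc n) : ℝ :=
  Complex.arg (-(herm n x y * herm n y w * herm n w x))

/-- The map `φ_z` of the paper, at the level of sets:
`φ_z(w) = Span((Span((Span({w,e_{n+1}}) ∩ z^⊥) ∪ {z}) ∩ e₁^⊥) ∪ {e₁}) ∩ e_{n+1}^⊥`. -/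
def phiSet (n : ℕ) (z w : Prj n) : Set (Prj n) :=
  projSpan n
    ((projSpan n ((projSpan n {w, eN1pt n} ∩ orthHyp n z) ∪ {z}) ∩ orthHyp n (e1pt n))
      ∪ {e1pt n}) ∩ orthHyp n (eN1pt n)



/-! ### Auxiliary lemmas -/

open Finset in
lemma eigen_key {m : ℕ} (hm : 1 ≤ m) (a : ℂ) (u : Fin m → ℂ) (hu : u ≠ 0) :
    ∃ M : GL (Fin m) ℂ,
      (M : Matrix (Fin m) (Fin m) ℂ) *
          (Matrix.of fun i j => (if i = j then a else 0) + u i * conj (u j)) *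
          ((M⁻¹ : GL (Fin m) ℂ) : Matrix (Fin m) (Fin m) ℂ) =
        Matrix.diagonal (fun i : Fin m =>
          if (i : ℕ) = m - 1 then a + ((∑ k, Complex.normSq (u k) : ℝ) : ℂ) else a) := by
  set s : ℝ := ∑ k, Complex.normSq (u k) with hs_def
  have hs : 0 < s := by
    obtain ⟨k, hk⟩ := Function.ne_iff.mp hu
    exact Finset.sum_pos' (fun i _ => Complex.normSq_nonneg _)
      ⟨k, Finset.mem_univ k, Complex.normSq_pos.mpr hk⟩
  set B : Matrix (Fin m) (Fin m) ℂ := Matrix.of (fun i j => u i * conj (u j)) with hB_def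
  have hB : B.IsHermitian := by
    show Bᴴ = B
    ext i j
    simp [hB_def, Matrix.conjTranspose_apply, mul_comm]
  have hB2 : B * B = (s : ℂ) • B := by
    ext i j
    simp only [Matrix.mul_apply, Matrix.smul_apply, hB_def, Matrix.of_apply, smul_eq_mul]
    calc ∑ k, (u i * conj (u k)) * (u k * conj (u j))
        = ∑ k, ((u k * conj (u k)) * (u i * conj (u j))) := by
          exact Finset.sum_congr rfl fun k _ => by ring
      _ = (s : ℂ) * (u i * conj (u j)) := by
          rw [← Finset.sum_mul]
          congr 1
          rw [hs_def]
          push_cast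
          exact Finset.sum_congr rfl fun k _ => (Complex.mul_conj (u k))
  have htr : B.trace = (s : ℂ) := by
    rw [hs_def]
    push_cast
    simp only [Matrix.trace, Matrix.diag, hB_def, Matrix.of_apply]
    exact Finset.sum_congr rfl fun k _ => (Complex.mul_conj (u k))
  set U : Matrix (Fin m) (Fin m) ℂ := (hB.eigenvectorUnitary : Matrix (Fin m) (Fin m) ℂ) with hU_def
  have hU1 : star U * U = 1 := Matrix.mem_unitaryGroup_iff'.mp hB.eigenvectorUnitary.2
  have hU2 : U * star U = 1 := Matrix.mem_unitaryGroup_iff.mp hB.eigenvectorUnitary.2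
  set ev : Fin m → ℝ := hB.eigenvalues with hev_def
  have hspec : star U * B * U = Matrix.diagonal (fun i => (ev i : ℂ)) := by
    have h := hB.conjStarAlgAut_star_eigenvectorUnitary
    rw [Unitary.conjStarAlgAut_star_apply] at h
    exact h
  have hDD : ∀ i, (ev i : ℂ) * ev i = (s : ℂ) * ev i := by
    intro i
    have h1 : (star U * B * U) * (star U * B * U) = (s : ℂ) • (star U * B * U) := by
      have e1 : (star U * B * U) * (star U * B * U) = star U * (B * (U * star U) * B) * U := by
        noncomm_ring
      rw [e1, hU2, Matrix.mul_one, hB2, Matrix.mul_smul, Matrix.smul_mul]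
    rw [hspec, Matrix.diagonal_mul_diagonal] at h1
    have h2 := congrFun (congrFun h1 i) i
    simpa [Matrix.diagonal_apply_eq] using h2
  have hsum : ∑ i, ev i = s := by
    have h2 : (Matrix.diagonal (fun i => (ev i : ℂ))).trace = (s : ℂ) := by
      rw [← hspec]
      calc (star U * B * U).trace = (U * (star U * B)).trace :=
            Matrix.trace_mul_comm (star U * B) U
        _ = ((U * star U) * B).trace := by rw [Matrix.mul_assoc]
        _ = B.trace := by rw [hU2, Matrix.one_mul]
        _ = s := htr
    rw [Matrix.trace_diagonal] at h2
    exact_mod_cast h2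
  have hev01 : ∀ i, ev i = 0 ∨ ev i = s := by
    intro i
    have h := hDD i
    have h' : ev i * ev i = s * ev i := by exact_mod_cast h
    have h'' : ev i * (ev i - s) = 0 := by ring_nf; linarith
    rcases mul_eq_zero.mp h'' with h | h
    · exact Or.inl h
    · exact Or.inr (by linarith)
  set T : Finset (Fin m) := Finset.univ.filter (fun i => ev i = s) with hT_def
  have hcard : T.card = 1 := by
    have hsplit : ∑ i, ev i = ∑ i ∈ T, ev i + ∑ i ∈ Finset.univ.filter (fun i => ¬ ev i = s), ev i :=
      (Finset.sum_filter_add_sum_filter_not _ _ _).symm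
    have h1 : ∑ i ∈ T, ev i = T.card * s := by
      rw [Finset.sum_congr rfl (fun i hi => (Finset.mem_filter.mp hi).2)]
      simp [mul_comm, hT_def]
    have h2 : ∑ i ∈ Finset.univ.filter (fun i => ¬ ev i = s), ev i = 0 := by
      apply Finset.sum_eq_zero
      intro i hi
      rcases hev01 i with h | h
      · exact h
      · exact absurd h (Finset.mem_filter.mp hi).2
    rw [hsum, h1, h2, add_zero] at hsplit
    have hc : (T.card : ℝ) * s = 1 * s := by rw [one_mul]; linarith
    have := mul_right_cancel₀ hs.ne' hc
    exact_mod_cast this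
  obtain ⟨i0, hi0⟩ := Finset.card_eq_one.mp hcard
  have hev_i0 : ev i0 = s := by
    have : i0 ∈ T := hi0 ▸ Finset.mem_singleton_self i0
    exact (Finset.mem_filter.mp this).2
  have hev_ne : ∀ j, j ≠ i0 → ev j = 0 := by
    intro j hj
    rcases hev01 j with h | h
    · exact h
    · exfalso
      have hmem : j ∈ T := Finset.mem_filter.mpr ⟨Finset.mem_univ j, h⟩
      rw [hi0, Finset.mem_singleton] at hmem
      exact hj hmem
  set ilast : Fin m := ⟨m - 1, by omega⟩ with hilast_def
  set σ : Equiv.Perm (Fin m) := Equiv.swap i0 ilast with hσ_def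
  set V : Matrix (Fin m) (Fin m) ℂ := U.submatrix id σ with hV_def
  have hstarV : star V = (star U).submatrix σ id := by
    ext i j
    simp [hV_def, Matrix.submatrix_apply, Matrix.star_apply]
  have hV1 : star V * V = 1 := by
    rw [hstarV, hV_def, ← Matrix.submatrix_mul _ _ σ id σ Function.bijective_id, hU1,
      Matrix.submatrix_one _ σ.injective]
  have hV2 : V * star V = 1 := by
    rw [hstarV, hV_def, ← Matrix.submatrix_mul _ _ id σ id σ.bijective, hU2,
      Matrix.submatrix_one _ Function.injective_id]
  refine ⟨⟨star V, V, hV1, hV2⟩, ?_⟩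
  show star V * _ * V = _
  have hAB : (Matrix.of fun i j => (if i = j then a else 0) + u i * conj (u j))
      = a • (1 : Matrix (Fin m) (Fin m) ℂ) + B := by
    ext i j
    simp [hB_def, Matrix.one_apply, Matrix.add_apply, Matrix.smul_apply]
  have hmid : star V * B * V = Matrix.diagonal (fun i => (ev (σ i) : ℂ)) := by
    rw [hstarV, hV_def]
    have hBid : B = B.submatrix id id := (Matrix.submatrix_id_id B).symm
    rw [hBid, ← Matrix.submatrix_mul _ _ σ id id Function.bijective_id,
      ← Matrix.submatrix_mul _ _ σ id σ Function.bijective_id]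
    rw [hspec, Matrix.submatrix_diagonal _ _ σ.injective]
    rfl
  rw [hAB, Matrix.mul_add, Matrix.add_mul, hmid]
  have h1 : star V * (a • (1 : Matrix (Fin m) (Fin m) ℂ)) * V
      = a • (1 : Matrix (Fin m) (Fin m) ℂ) := by
    rw [Matrix.mul_smul, Matrix.mul_one, Matrix.smul_mul, hV1]
  rw [h1]
  ext i j
  by_cases hij : i = j
  · subst hij
    simp only [Matrix.add_apply, Matrix.smul_apply, Matrix.one_apply_eq, Matrix.diagonal_apply_eq,
      smul_eq_mul, mul_one]
    by_cases h : i = ilast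
    · subst h
      have hsw : σ ilast = i0 := Equiv.swap_apply_right i0 ilast
      rw [hsw, hev_i0, if_pos]
      simp [hilast_def]
    · have hval : ¬ ((i : ℕ) = m - 1) := by
        intro hc
        exact h (Fin.ext (by simpa [hilast_def] using hc))
      rw [if_neg hval]
      have hσi : σ i ≠ i0 := by
        by_cases hi : i = i0
        · subst hi
          rw [hσ_def, Equiv.swap_apply_left]
          intro hc
          exact h (hc ▸ rfl)
        · rw [hσ_def, Equiv.swap_apply_of_ne_of_ne hi h]
          exact hi
      rw [hev_ne _ hσi]
      simp
  · simp [Matrix.add_apply, Matrix.one_apply_ne hij, Matrix.diagonal_apply_ne _ hij]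

/-- The "partner index" map encoding the sparsity pattern of `Hmat`. -/
def tfun (n : ℕ) (i : Fin (n + 1)) : Fin (n + 1) :=
  if i = 0 then Fin.last n else if i = Fin.last n then 0 else i

lemma zero_ne_last {n : ℕ} (hn : 1 ≤ n) : (0 : Fin (n + 1)) ≠ Fin.last n := by
  simp only [ne_eq, Fin.ext_iff, Fin.val_last, Fin.val_zero]
  omega

lemma hmat_eq (n : ℕ) (hn : 1 ≤ n) (i j : Fin (n + 1)) :
    Hmat n i j = if j = tfun n i then 1 else 0 := by
  have h0 := zero_ne_last hn
  by_cases hi0 : i = 0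
  · subst hi0; simp [Hmat, tfun, h0]
  · by_cases hil : i = Fin.last n
    · subst hil; simp [Hmat, tfun, h0, Ne.symm h0, hi0]
    · simp only [Hmat, tfun, if_neg hi0, if_neg hil]
      by_cases hij : j = i
      · subst hij; simp [hi0, hil]
      · rw [if_neg hij, if_neg]
        rintro (⟨h1, h2⟩ | ⟨h1, h2⟩ | ⟨h1, h2, h3⟩)
        · exact hi0 h1
        · exact hil h1
        · exact hij h1.symm

lemma idx_ne_zero {n : ℕ} (j : Fin (n - 1)) : (idx j : Fin (n + 1)) ≠ 0 := by
  simp [idx, Fin.ext_iff]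

lemma idx_ne_last {n : ℕ} (j : Fin (n - 1)) : (idx j : Fin (n + 1)) ≠ Fin.last n := by
  have := j.isLt
  simp only [ne_eq, Fin.ext_iff, idx, Fin.val_last]
  omega

lemma tfun_idx {n : ℕ} (j : Fin (n - 1)) : tfun n (idx j) = idx j := by
  simp [tfun, idx_ne_zero j, idx_ne_last j]

lemma herm_eval (n : ℕ) (hn : 2 ≤ n) (v w : Vc n) :
    herm n v w = v 0 * conj (w (Fin.last n)) + v (Fin.last n) * conj (w 0) +
      ∑ j : Fin (n - 1), v (idx j) * conj (w (idx j)) := by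
  have h0 : (0 : Fin (n + 1)) ≠ Fin.last n := zero_ne_last (by omega)
  have hstep : herm n v w = ∑ i, v i * conj (w (tfun n i)) := by
    rw [herm]
    refine Finset.sum_congr rfl fun i _ => ?_
    rw [Finset.sum_congr rfl fun j _ => by rw [hmat_eq n (by omega) i j]]
    simp [mul_ite, ite_mul, Finset.sum_ite_eq']
  rw [hstep]
  have hsub : ({0, Fin.last n} : Finset (Fin (n + 1))) ⊆ Finset.univ := Finset.subset_univ _
  rw [← Finset.sum_sdiff hsub, Finset.sum_pair h0]
  have hsd : ∑ i ∈ Finset.univ \ ({0, Fin.last n} : Finset (Fin (n + 1))),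
      v i * conj (w (tfun n i)) = ∑ j : Fin (n - 1), v (idx j) * conj (w (idx j)) := by
    symm
    refine Finset.sum_bij (fun j _ => idx j) ?_ ?_ ?_ ?_
    · intro j _
      simp [Finset.mem_sdiff, idx_ne_zero j, idx_ne_last j]
    · intro j1 _ j2 _ h
      have := congrArg Fin.val h
      simp only [idx] at this
      exact Fin.ext (by omega)
    · intro b hb
      simp only [Finset.mem_sdiff, Finset.mem_univ, Finset.mem_insert, Finset.mem_singleton,
        true_and, not_or] at hb
      obtain ⟨hb0, hbl⟩ := hb
      have hb0' : (b : ℕ) ≠ 0 := fun h => hb0 (Fin.ext h)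
      have hbl' : (b : ℕ) ≠ n := fun h => hbl (Fin.ext (by simpa using h))
      have hblt := b.isLt
      refine ⟨⟨(b : ℕ) - 1, by omega⟩, Finset.mem_univ _, ?_⟩
      exact Fin.ext (by simp [idx]; omega)
    · intro j _
      rw [tfun_idx]
  rw [hsd]
  have ht0 : tfun n 0 = Fin.last n := by simp [tfun]
  have htl : tfun n (Fin.last n) = 0 := by simp [tfun, Ne.symm h0]
  rw [ht0, htl]
  ring

/-- For `z ∈ ∂ℍⁿ_ℂ` not on the projective line through `[e₁]` and
`[e_{n+1}]`, the matrix `M_z` is diagonalizable, conjugate to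
`|z₁z_{n+1}| · diag(−e^{i𝔸([z],[e₁],[e_{n+1}])}, …, −e^{i𝔸([z],[e₁],[e_{n+1}])},
e^{i𝔸([e₁],[z],[e_{n+1}])})`, with the last eigenvalue of multiplicity one. -/
theorem Mz_diagonalizable_with_cartan_eigenvalues
    (n : ℕ) (hn : 2 ≤ n) (zv : Vc n) (hzne : zv ≠ 0)
    (hbd : herm n zv zv = 0)
    (hmid : midOf n zv ≠ 0) :
    ∃ M : GL (Fin (n - 1)) ℂ,
      (M : Matrix (Fin (n - 1)) (Fin (n - 1)) ℂ) * Mz n zv *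
          ((M⁻¹ : GL (Fin (n - 1)) ℂ) : Matrix (Fin (n - 1)) (Fin (n - 1)) ℂ) =
        Matrix.diagonal (fun i : Fin (n - 1) =>
          if (i : ℕ) = n - 2 then
            (‖zv 0 * zv (Fin.last n)‖ : ℂ) *
              Complex.exp (Complex.I * (cartanArg n (e1v n) zv (eN1v n)))
          else
            (‖zv 0 * zv (Fin.last n)‖ : ℂ) *
              (-Complex.exp (Complex.I * (cartanArg n zv (e1v n) (eN1v n))))) := by
  have hn1 : (1:ℕ) ≤ n - 1 := by omega
  have h0l : (0 : Fin (n + 1)) ≠ Fin.last n := zero_ne_last (by omega)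
  set u : Fin (n - 1) → ℂ := midOf n zv with hu_def
  set a : ℂ := zv (Fin.last n) * conj (zv 0) with ha_def
  set s : ℝ := ∑ k, Complex.normSq (u k) with hs_def
  obtain ⟨M, hM⟩ := eigen_key hn1 a u hmid
  refine ⟨M, ?_⟩
  have hMz : Mz n zv = Matrix.of fun i j => (if i = j then a else 0) + u i * conj (u j) := rfl
  rw [hMz, hM]
  -- the boundary relation
  have hbd' : conj a + a + (s : ℂ) = 0 := by
    have h := hbd
    rw [herm_eval n hn zv zv] at h
    have h1 : ∑ j : Fin (n - 1), zv (idx j) * conj (zv (idx j)) = (s : ℂ) := by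
      rw [hs_def]
      push_cast
      exact Finset.sum_congr rfl fun k _ => Complex.mul_conj (zv (idx k))
    rw [h1] at h
    have hconj : conj a = zv 0 * conj (zv (Fin.last n)) := by
      rw [ha_def, map_mul, Complex.conj_conj, mul_comm]
    rw [hconj, ha_def]
    linear_combination h
  -- evaluations of the Hermitian form
  have hA1 : herm n (e1v n) zv = conj (zv (Fin.last n)) := by
    rw [herm_eval n hn]
    simp [e1v, Pi.single_apply, Ne.symm h0l, idx_ne_zero]
  have hA2 : herm n zv (eN1v n) = zv 0 := by
    rw [herm_eval n hn]
    simp [eN1v, Pi.single_apply, h0l, idx_ne_last]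
  have hA3 : herm n (eN1v n) (e1v n) = 1 := by
    rw [herm_eval n hn]
    simp [e1v, eN1v, Pi.single_apply, h0l, Ne.symm h0l, idx_ne_zero, idx_ne_last]
  have hB1 : herm n zv (e1v n) = zv (Fin.last n) := by
    rw [herm_eval n hn]
    simp [e1v, Pi.single_apply, Ne.symm h0l, idx_ne_zero]
  have hB2 : herm n (e1v n) (eN1v n) = 1 := by
    rw [herm_eval n hn]
    simp [e1v, eN1v, Pi.single_apply, h0l, Ne.symm h0l, idx_ne_zero, idx_ne_last]
  have hB3 : herm n (eN1v n) zv = conj (zv 0) := by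
    rw [herm_eval n hn]
    simp [eN1v, Pi.single_apply, h0l, idx_ne_last]
  have hc1 : cartanArg n (e1v n) zv (eN1v n) = Complex.arg (-(conj a)) := by
    rw [cartanArg, hA1, hA2, hA3]
    congr 1
    rw [ha_def, map_mul, Complex.conj_conj]
    ring
  have hc2 : cartanArg n zv (e1v n) (eN1v n) = Complex.arg (-a) := by
    rw [cartanArg, hB1, hB2, hB3]
    congr 1
    rw [ha_def]
    ring
  have habs1 : ‖zv 0 * zv (Fin.last n)‖ = ‖-(conj a)‖ := by
    rw [ha_def]
    simp [map_mul, Complex.norm_conj, mul_comm]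
  have habs2 : ‖zv 0 * zv (Fin.last n)‖ = ‖-a‖ := by
    rw [ha_def]
    simp [map_mul, Complex.norm_conj, mul_comm]
  rw [show n - 1 - 1 = n - 2 from by omega]
  apply congrArg Matrix.diagonal
  funext i
  by_cases h : (i : ℕ) = n - 2
  · rw [if_pos h, if_pos h, hc1, habs1]
    rw [mul_comm Complex.I, Complex.norm_mul_exp_arg_mul_I (-(conj a))]
    linear_combination hbd'
  · rw [if_neg h, if_neg h, hc2, habs2]
    rw [mul_comm Complex.I, mul_neg, Complex.norm_mul_exp_arg_mul_I (-a), neg_neg]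


end CKG
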